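/- Let f₁, f₂ : ℝ^d → ℝ^d be Lipschitz continuous with Lipschitz constants L₁ and L₂, with ‖f₁(z) − f₂(z)‖ ≤ μ for all z ∈ ℝ^d for some μ > 0. Let 0 < T₁ < t̆ ≤ T₂ with t̆ − T₁ ≤ η for some η > 0. Let x, x̃ : [T₁, T₂] → ℝ^d be continuous with x(T₁) = x̃(T₁), x′(t) = f₂(x(t)) for t ∈ (T₁, T₂], x̃′(t) = f₁(x̃(t)) for t ∈ (T₁, t̆] and x̃′(t) = f₂(x̃(t)) for t ∈ (t̆, T₂]. Then for every t ∈ (t̆, T₂], ‖x(t) − x̃(t)‖ ≤ μ η exp(L₂(t − t̆) + max(L₁, L₂) η), where ‖·‖ is the Euclidean norm on ℝ^d. -/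
import Mathlib

open Set Filter Real Topology

lemma gronwall_interior {E : Type*} [NormedAddCommGroup E] [NormedSpace ℝ E]
    {g g' : ℝ → E} {a b K ε δ : ℝ}
    (hcont : ContinuousOn g (Icc a b))
    (hd : ∀ t ∈ Ioo a b, HasDerivAt g (g' t) t)
    (hbound : ∀ t ∈ Ioo a b, ‖g' t‖ ≤ K * ‖g t‖ + ε)
    (hga : ‖g a‖ ≤ δ) :
    ∀ t ∈ Icc a b, ‖g t‖ ≤ gronwallBound δ K ε (t - a) := by
  intro t ht
  rcases eq_or_lt_of_le ht.1 with h | hat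
  · subst h; simpa [gronwallBound_x0] using hga
  have key : ∀ s ∈ Ioo a t, ‖g t‖ ≤ gronwallBound (‖g s‖) K ε (t - s) := by
    intro s hs
    have hsub : Icc s t ⊆ Icc a b := Icc_subset_Icc hs.1.le ht.2
    have hsub2 : Ico s t ⊆ Ioo a b := fun y hy => ⟨hs.1.trans_le hy.1, hy.2.trans_le ht.2⟩
    exact norm_le_gronwallBound_of_norm_deriv_right_le (hcont.mono hsub)
      (fun y hy => (hd y (hsub2 hy)).hasDerivWithinAt)
      le_rfl (fun y hy => hbound y (hsub2 hy)) t ⟨hs.2.le, le_rfl⟩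
  have hgten : Tendsto (fun s => ‖g s‖) (𝓝[Ioo a t] a) (𝓝 ‖g a‖) := by
    have hsub : Ioo a t ⊆ Icc a b := fun y hy => ⟨hy.1.le, hy.2.le.trans ht.2⟩
    exact ((hcont.continuousWithinAt ⟨le_rfl, hat.le.trans ht.2⟩).mono_left
      (nhdsWithin_mono a hsub)).norm
  have hsten : Tendsto (fun s : ℝ => t - s) (𝓝[Ioo a t] a) (𝓝 (t - a)) :=
    (tendsto_const_nhds.sub tendsto_id).mono_left nhdsWithin_le_nhds
  have hb : Tendsto (fun s => gronwallBound (‖g s‖) K ε (t - s)) (𝓝[Ioo a t] a)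
      (𝓝 (gronwallBound (‖g a‖) K ε (t - a))) := by
    by_cases hK : K = 0
    · simp only [gronwallBound, if_pos hK]
      exact hgten.add (tendsto_const_nhds.mul hsten)
    · simp only [gronwallBound, if_neg hK]
      exact (hgten.mul ((Real.continuous_exp.tendsto _).comp (tendsto_const_nhds.mul hsten))).add
        (tendsto_const_nhds.mul (((Real.continuous_exp.tendsto _).comp
          (tendsto_const_nhds.mul hsten)).sub tendsto_const_nhds))
  haveI : (𝓝[Ioo a t] a).NeBot := left_nhdsWithin_Ioo_neBot hat
  have h1 : ‖g t‖ ≤ gronwallBound (‖g a‖) K ε (t - a) :=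
    ge_of_tendsto hb (eventually_mem_nhdsWithin.mono fun s hs => key s hs)
  refine h1.trans ?_
  by_cases hK : K = 0
  · simp only [gronwallBound, if_pos hK]; linarith
  · simp only [gronwallBound, if_neg hK]
    have := Real.exp_pos (K * (t - a))
    nlinarith [hga]

lemma gronwallBound_zero_le {K ε s : ℝ} (hK : 0 ≤ K) (hε : 0 ≤ ε) (hs : 0 ≤ s) :
    gronwallBound 0 K ε s ≤ ε * s * Real.exp (K * s) := by
  by_cases hKz : K = 0
  · simp [gronwallBound, hKz]
  · simp only [gronwallBound, if_neg hKz, zero_mul, zero_add]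
    have hKpos : 0 < K := lt_of_le_of_ne hK (Ne.symm hKz)
    have h1 : Real.exp (K * s) - 1 ≤ (K * s) * Real.exp (K * s) := by
      have h2 := Real.add_one_le_exp (-(K * s))
      have h3 := Real.exp_pos (K * s)
      have h4 : Real.exp (K * s) * Real.exp (-(K * s)) = 1 := by
        rw [← Real.exp_add]; simp
      nlinarith [mul_le_mul_of_nonneg_left h2 h3.le]
    rw [div_mul_eq_mul_div, div_le_iff₀ hKpos]
    nlinarith

/-- Third case of the switched-system comparison bound: after the approximate
switching time `t̆`, the gap accumulated on the mismatch interval `(T₁, t̆]` is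
amplified by at most `exp (L₂ (t - t̆))`, giving
`‖x t - x̃ t‖ ≤ μ η exp (L₂ (t - t̆) + max L₁ L₂ * η)`. -/
theorem switched_system_comparison_third_case
    {d : ℕ}
    (f₁ f₂ : EuclideanSpace ℝ (Fin d) → EuclideanSpace ℝ (Fin d))
    (L₁ L₂ μ η T₁ T₂ tb : ℝ)
    (hf₁ : ∀ a b, ‖f₁ a - f₁ b‖ ≤ L₁ * ‖a - b‖)
    (hf₂ : ∀ a b, ‖f₂ a - f₂ b‖ ≤ L₂ * ‖a - b‖)
    (hμ : 0 < μ) (hη : 0 < η)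
    (hdiff : ∀ z, ‖f₁ z - f₂ z‖ ≤ μ)
    (hT₁pos : 0 < T₁) (hT₁tb : T₁ < tb) (htbT₂ : tb ≤ T₂)
    (htbη : tb - T₁ ≤ η)
    (x xt : ℝ → EuclideanSpace ℝ (Fin d))
    (hxc : ContinuousOn x (Set.Icc T₁ T₂))
    (hxtc : ContinuousOn xt (Set.Icc T₁ T₂))
    (hinit : x T₁ = xt T₁)
    (hx : ∀ t ∈ Set.Ioc T₁ T₂, HasDerivAt x (f₂ (x t)) t)
    (hxt1 : ∀ t ∈ Set.Ioc T₁ tb, HasDerivAt xt (f₁ (xt t)) t)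
    (hxt2 : ∀ t ∈ Set.Ioc tb T₂, HasDerivAt xt (f₂ (xt t)) t) :
    ∀ t ∈ Set.Ioc tb T₂,
      ‖x t - xt t‖ ≤ μ * η * Real.exp (L₂ * (t - tb) + max L₁ L₂ * η) := by
  intro t ht
  by_cases hd0 : d = 0
  · subst hd0
    have hxx : x t = xt t := Subsingleton.elim _ _
    rw [hxx, sub_self, norm_zero]
    positivity
  · have hL₂ : 0 ≤ L₂ := by
      have h := hf₂ (EuclideanSpace.single (⟨0, Nat.pos_of_ne_zero hd0⟩ : Fin d) (1 : ℝ)) 0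
      rw [sub_zero, EuclideanSpace.norm_single] at h
      simp only [norm_one, mul_one] at h
      exact (norm_nonneg _).trans h
    have hK : 0 ≤ max L₁ L₂ := hL₂.trans (le_max_right _ _)
    -- Step 1: bound on [T₁, tb]
    have step1 : ∀ s ∈ Icc T₁ tb,
        ‖x s - xt s‖ ≤ gronwallBound 0 (max L₁ L₂) μ (s - T₁) := by
      apply gronwall_interior (g' := fun s => f₂ (x s) - f₁ (xt s))
      · exact (hxc.sub hxtc).mono (Icc_subset_Icc le_rfl htbT₂)
      · intro s hs
        exact (hx s ⟨hs.1, hs.2.le.trans htbT₂⟩).sub (hxt1 s ⟨hs.1, hs.2.le⟩)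
      · intro s hs
        have h1 : f₂ (x s) - f₁ (xt s) = (f₂ (x s) - f₂ (xt s)) + (f₂ (xt s) - f₁ (xt s)) := by
          abel
        have h2 : ‖f₂ (xt s) - f₁ (xt s)‖ ≤ μ := by
          rw [norm_sub_rev]; exact hdiff _
        calc ‖f₂ (x s) - f₁ (xt s)‖
            ≤ ‖f₂ (x s) - f₂ (xt s)‖ + ‖f₂ (xt s) - f₁ (xt s)‖ := by
              rw [h1]; exact norm_add_le _ _
          _ ≤ L₂ * ‖x s - xt s‖ + μ := add_le_add (hf₂ _ _) h2
          _ ≤ max L₁ L₂ * ‖x s - xt s‖ + μ := by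
              gcongr; exact le_max_right _ _
      · rw [hinit, sub_self, norm_zero]
    have hgtb : ‖x tb - xt tb‖ ≤ μ * η * Real.exp (max L₁ L₂ * η) := by
      refine ((step1 tb ⟨hT₁tb.le, le_rfl⟩).trans
        (gronwallBound_zero_le hK hμ.le (by linarith))).trans ?_
      have h1 : Real.exp (max L₁ L₂ * (tb - T₁)) ≤ Real.exp (max L₁ L₂ * η) :=
        Real.exp_le_exp.2 (mul_le_mul_of_nonneg_left htbη hK)
      exact mul_le_mul (mul_le_mul_of_nonneg_left htbη hμ.le) h1
        (Real.exp_pos _).le (by positivity)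
    -- Step 2: bound on [tb, t]
    have step2 := gronwall_interior (g := fun s => x s - xt s)
      (g' := fun s => f₂ (x s) - f₂ (xt s)) (a := tb) (b := t) (K := L₂) (ε := 0)
      (δ := μ * η * Real.exp (max L₁ L₂ * η))
      ((hxc.sub hxtc).mono (Icc_subset_Icc hT₁tb.le ht.2))
      (fun s hs => (hx s ⟨hT₁tb.trans hs.1, hs.2.le.trans ht.2⟩).sub
        (hxt2 s ⟨hs.1, hs.2.le.trans ht.2⟩))
      (fun s _hs => by simpa using hf₂ (x s) (xt s))
      hgtb t ⟨ht.1.le, le_rfl⟩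
    rw [gronwallBound_ε0] at step2
    rw [Real.exp_add]
    calc ‖x t - xt t‖ ≤ μ * η * Real.exp (max L₁ L₂ * η) * Real.exp (L₂ * (t - tb)) := step2
      _ = μ * η * (Real.exp (L₂ * (t - tb)) * Real.exp (max L₁ L₂ * η)) := by ring
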